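/- Let E be a finite-dimensional real inner product space, let M : E ≃ₗᵢ[ℝ] E be a linear isometry equivalence, let c ∈ E, and define the affine isometry f : E → E by f(x) = M x + c. Let K = {v ∈ E : M v = v} and let p = P_K c be the orthogonal projection of c onto K. Then the Min-Set of f, namely Min(f) = {x ∈ E : ∀ y ∈ E, ‖f x − x‖ ≤ ‖f y − y‖}, equals the set {x ∈ E : M x − x = p − c}; this set is nonempty, and it is an affine subspace of E whose direction is exactly K (i.e. if x ∈ Min(f) then x + v ∈ Min(f) if and only if v ∈ K). Moreover f acts on Min(f) as the translation by p: for every x ∈ Min(f), f(x) = x + p; in particular f maps Min(f) onto itself. -/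

import Mathlib

/-- Structure of the Min-Set of an affine isometry `f(x) = M x + c` of a
finite-dimensional Euclidean space: with `K = ker (M − id)` and `p` the orthogonal
projection of `c` onto `K`, the set of points minimizing the displacement
`x ↦ ‖f x − x‖` equals `{x | M x − x = p − c}`; it is nonempty, it is an affine
subspace with direction exactly `K`, `f` acts on it as translation by `p`, and `f`
maps it onto itself. -/
theorem affineIsometry_minSet_structure
    {E : Type*} [NormedAddCommGroup E] [InnerProductSpace ℝ E] [FiniteDimensional ℝ E]
    (M : E ≃ₗᵢ[ℝ] E) (c : E) (f : E → E) (hf : ∀ x, f x = M x + c)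
    (K : Submodule ℝ E) (hK : K = LinearMap.ker ((M.toLinearEquiv : E →ₗ[ℝ] E) - LinearMap.id))
    (p : E) (hp : p = (K.orthogonalProjection c : E))
    (minSet : Set E) (hmin : minSet = {x : E | ∀ y : E, ‖f x - x‖ ≤ ‖f y - y‖}) :
    minSet = {x : E | M x - x = p - c} ∧
      minSet.Nonempty ∧
      (∀ x ∈ minSet, ∀ v : E, x + v ∈ minSet ↔ v ∈ K) ∧
      (∀ x ∈ minSet, f x = x + p) ∧
      f '' minSet = minSet := by
  set T : E →ₗ[ℝ] E := (M.toLinearEquiv : E →ₗ[ℝ] E) - LinearMap.id with hT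
  have hTapply : ∀ x : E, T x = M x - x := by
    intro x; simp [hT, LinearMap.sub_apply]
  have hKker : K = LinearMap.ker T := hK
  have hpK : p ∈ K := by rw [hp]; exact (K.orthogonalProjection c).2
  have hmemK : ∀ v : E, v ∈ K ↔ M v = v := by
    intro v
    rw [hKker, LinearMap.mem_ker, hTapply, sub_eq_zero]
  -- range T ≤ Kᗮ
  have hrange_le : LinearMap.range T ≤ Kᗮ := by
    rintro _ ⟨x, rfl⟩
    rw [Submodule.mem_orthogonal]
    intro v hv
    have hv' : M v = v := (hmemK v).mp hv
    rw [hTapply, inner_sub_right]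
    have h4 : (inner ℝ (M v) (M x) : ℝ) = inner ℝ v x := M.inner_map_map v x
    rw [hv'] at h4
    rw [h4]
    ring
  have hrange : LinearMap.range T = Kᗮ := by
    have h1 := LinearMap.finrank_range_add_finrank_ker T
    have h2 := Submodule.finrank_add_finrank_orthogonal (K := K)
    have h3 : Module.finrank ℝ K = Module.finrank ℝ (LinearMap.ker T) := by rw [hKker]
    exact Submodule.eq_of_le_of_finrank_eq hrange_le (by omega)
  have hcp : c - p ∈ Kᗮ := by
    rw [hp]
    have := K.sub_starProjection_mem_orthogonal c; rwa [Submodule.starProjection_apply] at this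
  obtain ⟨x₀, hx₀⟩ : ∃ x₀ : E, T x₀ = p - c := by
    have : p - c ∈ LinearMap.range T := by
      rw [hrange]
      have := Kᗮ.neg_mem hcp
      simpa using this
    exact this
  -- key norm identity
  have hnorm : ∀ y : E, ‖f y - y‖ ^ 2 = ‖T y + (c - p)‖ ^ 2 + ‖p‖ ^ 2 := by
    intro y
    have h1 : f y - y = (T y + (c - p)) + p := by
      rw [hf, hTapply]; abel
    have h2 : T y + (c - p) ∈ Kᗮ :=
      Kᗮ.add_mem (hrange ▸ LinearMap.mem_range_self T y) hcp
    have h3 : (inner ℝ (T y + (c - p)) p : ℝ) = 0 :=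
      Submodule.inner_left_of_mem_orthogonal hpK h2
    rw [h1, norm_add_sq_real, h3]
    ring
  have sqle : ∀ a b : ℝ, 0 ≤ a → 0 ≤ b → a ^ 2 ≤ b ^ 2 → a ≤ b := by
    intro a b ha hb h; nlinarith
  -- characterization of minSet
  have hchar : minSet = {x : E | M x - x = p - c} := by
    rw [hmin]
    ext x
    simp only [Set.mem_setOf_eq]
    constructor
    · intro hx
      have hle := hx x₀
      have h0 : ‖f x₀ - x₀‖ ^ 2 = ‖p‖ ^ 2 := by
        rw [hnorm, hx₀]; simp
      have h1 : ‖T x + (c - p)‖ ^ 2 + ‖p‖ ^ 2 ≤ ‖p‖ ^ 2 := by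
        rw [← hnorm, ← h0]
        exact pow_le_pow_left₀ (norm_nonneg _) hle 2
      have h2 : ‖T x + (c - p)‖ = 0 := by nlinarith [norm_nonneg (T x + (c - p))]
      have h3 : T x + (c - p) = 0 := norm_eq_zero.mp h2
      rw [hTapply] at h3
      have : M x - x = p - c := by
        have := h3; abel_nf at this ⊢; linear_combination (norm := abel_nf) this
      exact this
    · intro hx y
      apply sqle _ _ (norm_nonneg _) (norm_nonneg _)
      rw [hnorm, hnorm y, hTapply, hx]
      have : p - c + (c - p) = 0 := by abel
      rw [this]
      simp
  refine ⟨hchar, ⟨x₀, ?_⟩, ?_, ?_, ?_⟩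
  · rw [hchar]; rw [hTapply] at hx₀; exact hx₀
  · intro x hx v
    rw [hchar] at hx ⊢
    simp only [Set.mem_setOf_eq] at hx ⊢
    rw [← hTapply] at hx ⊢
    rw [map_add, hmemK, ← sub_eq_zero (a := M v), ← hTapply]
    constructor
    · intro h
      have : T x + T v = T x := by rw [h, hx]
      simpa using this
    · intro h; rw [h, add_zero, hx]
  · intro x hx
    rw [hchar] at hx
    simp only [Set.mem_setOf_eq] at hx
    rw [hf]
    have : M x = x + (p - c) := by rw [← hx]; abel
    rw [this]; abel
  · have hact : ∀ x ∈ minSet, f x = x + p := by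
      intro x hx
      rw [hchar] at hx
      simp only [Set.mem_setOf_eq] at hx
      rw [hf]
      have : M x = x + (p - c) := by rw [← hx]; abel
      rw [this]; abel
    have hdir : ∀ x ∈ minSet, ∀ v : E, x + v ∈ minSet ↔ v ∈ K := by
      intro x hx v
      rw [hchar] at hx ⊢
      simp only [Set.mem_setOf_eq] at hx ⊢
      rw [← hTapply] at hx ⊢
      rw [map_add, hmemK, ← sub_eq_zero (a := M v), ← hTapply]
      constructor
      · intro h
        have : T x + T v = T x := by rw [h, hx]
        simpa using this
      · intro h; rw [h, add_zero, hx]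
    ext y
    constructor
    · rintro ⟨x, hx, rfl⟩
      rw [hact x hx]
      exact (hdir x hx p).mpr hpK
    · intro hy
      refine ⟨y - p, ?_, ?_⟩
      · have : y + (-p) ∈ minSet := (hdir y hy (-p)).mpr (K.neg_mem hpK)
        simpa [sub_eq_add_neg] using this
      · have hyp : y - p ∈ minSet := by
          have : y + (-p) ∈ minSet := (hdir y hy (-p)).mpr (K.neg_mem hpK)
          simpa [sub_eq_add_neg] using this
        rw [hact _ hyp]; abel
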